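/- For every integer $g \geq 1$ and nonnegative integers $k_1,\dots,k_{2g+1}$ with $s_1 = k_1 + \dots + k_{2g+1} \geq \alpha g$ where $\alpha = \frac{9 + \sqrt{237}}{12}$, the following inequality holds: $\frac{-13g^3 - 9g^2 + 4g}{6} + g s_1(2s_1 + 2 - 3g) + s_2(2s_1 - 3g) + 2s_3 \geq 0$, where $s_j$ denotes the $j$th elementary symmetric polynomial in $k_1,\dots,k_{2g+1}$. -/
import Mathlib


/-- The `j`th elementary symmetric polynomial of `k : Fin (2*g+1) → ℕ`, as a real number. -/
def S {g : ℕ} (k : Fin (2 * g + 1) → ℕ) (j : ℕ) : ℝ :=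
  ∑ P ∈ Finset.powersetCard j (Finset.univ : Finset (Fin (2 * g + 1))), ∏ i ∈ P, (k i : ℝ)

lemma S_nonneg {g : ℕ} (k : Fin (2 * g + 1) → ℕ) (j : ℕ) : 0 ≤ S k j := by
  apply Finset.sum_nonneg
  intro P _
  exact Finset.prod_nonneg fun i _ => Nat.cast_nonneg _

theorem general_genus_inequality (g : ℕ) (hg : 1 ≤ g) (k : Fin (2 * g + 1) → ℕ)
    (h : (9 + Real.sqrt 237) / 12 * g ≤ S k 1) :
    0 ≤ (-13 * (g : ℝ) ^ 3 - 9 * g ^ 2 + 4 * g) / 6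
        + g * S k 1 * (2 * S k 1 + 2 - 3 * g)
        + S k 2 * (2 * S k 1 - 3 * g) + 2 * S k 3 := by
  have hg' : (1 : ℝ) ≤ g := by exact_mod_cast hg
  have ha : Real.sqrt 237 ^ 2 = 237 := Real.sq_sqrt (by norm_num)
  have ha15 : (15 : ℝ) ≤ Real.sqrt 237 := by
    nlinarith [Real.sqrt_nonneg 237]
  have hs2 := S_nonneg k 2
  have hs3 := S_nonneg k 3
  have hgpos : (0:ℝ) ≤ g := by linarith
  have h1 : (0:ℝ) ≤ S k 1 - (9 + Real.sqrt 237) / 12 * g := by linarith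
  have h2 : (0:ℝ) ≤ S k 1 + (Real.sqrt 237 - 9) / 12 * g := by nlinarith
  have hA : (0:ℝ) ≤ 2 * S k 1 ^ 2 - 3 * g * S k 1 - 13 / 6 * g ^ 2 := by
    nlinarith [mul_nonneg h1 h2]
  have hB : 2 * (g:ℝ) ≤ S k 1 := by nlinarith
  have hC : 0 ≤ S k 2 * (2 * S k 1 - 3 * (g:ℝ)) :=
    mul_nonneg hs2 (by linarith)
  nlinarith [mul_nonneg hgpos hA, mul_nonneg hgpos (sub_nonneg.2 hB)]
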